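/- Let E be a Weierstrass elliptic curve y² = x³ + ax + b over a field K with char(K) > 3 and 4a³+27b² ≠ 0, with the chord-tangent addition. The cancellation law holds: if A + B = A + B' for A, B, B' ∈ E, then B = B'. -/

import Mathlib

/-- Points of the elliptic curve: the point at infinity `zero` and affine points. -/
inductive Pt (K : Type*) where
  | zero : Pt K
  | some (x y : K) : Pt K

namespace Pt

variable {K : Type*} [Field K]

/-- Negation: reflection about the x-axis. -/
def neg : Pt K → Pt K
  | .zero => .zero
  | .some x y => .some x (-y)

open scoped Classical in
/-- The chord-tangent addition on the curve `y² = x³ + a x + b`. -/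
noncomputable def add (a : K) : Pt K → Pt K → Pt K
  | .zero, P => P
  | P, .zero => P
  | .some x₁ y₁, .some x₂ y₂ =>
    if x₁ = x₂ ∧ y₁ = -y₂ then .zero
    else
      let α := if x₁ = x₂ then (3 * x₁ ^ 2 + a) / (2 * y₁) else (y₁ - y₂) / (x₁ - x₂)
      let x₃ := α ^ 2 - x₁ - x₂
      .some x₃ (-y₁ + α * (x₁ - x₃))

end Pt

/-- Membership in the affine Weierstrass curve (the point at infinity belongs). -/
def OnCurve {K : Type*} [Field K] (a b : K) : Pt K → Prop
  | .zero => True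
  | .some x y => y ^ 2 = x ^ 3 + a * x + b

section Aux

open WeierstrassCurve WeierstrassCurve.Affine

variable {K : Type*} [Field K]

/-- The mathlib Weierstrass curve corresponding to `y² = x³ + a x + b`. -/
def Wc (a b : K) : WeierstrassCurve.Affine K := ⟨0, 0, 0, a, b⟩

lemma Wc_a₁ (a b : K) : (Wc a b).a₁ = 0 := rfl
lemma Wc_a₂ (a b : K) : (Wc a b).a₂ = 0 := rfl
lemma Wc_a₃ (a b : K) : (Wc a b).a₃ = 0 := rfl
lemma Wc_a₄ (a b : K) : (Wc a b).a₄ = a := rfl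
lemma Wc_a₆ (a b : K) : (Wc a b).a₆ = b := rfl

lemma Wc_Δ (a b : K) : (Wc a b).Δ = -16 * (4 * a ^ 3 + 27 * b ^ 2) := by
  simp only [WeierstrassCurve.Δ, b₂, b₄, b₆, b₈, Wc_a₁, Wc_a₂, Wc_a₃, Wc_a₄, Wc_a₆]
  ring

lemma Wc_Δ_ne (h2 : (2 : K) ≠ 0) {a b : K} (hab : 4 * a ^ 3 + 27 * b ^ 2 ≠ 0) :
    (Wc a b).Δ ≠ 0 := by
  rw [Wc_Δ]
  have h16 : (-16 : K) ≠ 0 := by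
    have : (-16 : K) = -(2 ^ 4) := by norm_num
    rw [this]
    exact neg_ne_zero.mpr (pow_ne_zero _ h2)
  exact mul_ne_zero h16 hab

lemma Wc_equation {a b x y : K} :
    (Wc a b).Equation x y ↔ y ^ 2 = x ^ 3 + a * x + b := by
  rw [equation_iff]
  simp only [Wc_a₁, Wc_a₂, Wc_a₃, Wc_a₄, Wc_a₆]
  constructor <;> intro h <;> linear_combination h

lemma Wc_ns (h2 : (2 : K) ≠ 0) {a b : K} (hab : 4 * a ^ 3 + 27 * b ^ 2 ≠ 0)
    {x y : K} (h : y ^ 2 = x ^ 3 + a * x + b) : (Wc a b).Nonsingular x y :=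
  (equation_iff_nonsingular_of_Δ_ne_zero (W := Wc a b) (Wc_Δ_ne h2 hab)).mp (Wc_equation.mpr h)

lemma Wc_negY (a b x y : K) : (Wc a b).negY x y = -y := by
  simp [negY, Wc_a₁, Wc_a₃]

variable (h2 : (2 : K) ≠ 0) {a b : K} (hab : 4 * a ^ 3 + 27 * b ^ 2 ≠ 0)

/-- Map on-curve points to mathlib points. -/
noncomputable def toPoint : (P : Pt K) → OnCurve a b P → (Wc a b).Point
  | .zero, _ => 0
  | .some x y, h => .some _ _ (Wc_ns h2 hab h)

lemma toPoint_irrel {P P' : Pt K} (hPP : P = P') (h : OnCurve a b P)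
    (h' : OnCurve a b P') : toPoint h2 hab P h = toPoint h2 hab P' h' := by
  subst hPP; rfl

lemma Point.some_congr {W : WeierstrassCurve.Affine K} {x y x' y' : K}
    (hx : x = x') (hy : y = y') (h : W.Nonsingular x y) (h' : W.Nonsingular x' y') :
    Point.some _ _ h = Point.some _ _ h' := by subst hx; subst hy; rfl

lemma toPoint_injective (P Q : Pt K) (hP : OnCurve a b P) (hQ : OnCurve a b Q)
    (h : toPoint h2 hab P hP = toPoint h2 hab Q hQ) : P = Q := by
  cases P with
  | zero =>
    cases Q with
    | zero => rfl
    | some x y => exact absurd h.symm (Point.some_ne_zero _)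
  | some x y =>
    cases Q with
    | zero => exact absurd h (Point.some_ne_zero _)
    | some x' y' =>
      simp only [toPoint] at h
      injection h with hx hy
      rw [hx, hy]

open scoped Classical in
lemma toPoint_add (P Q : Pt K) (hP : OnCurve a b P) (hQ : OnCurve a b Q) :
    ∃ hR : OnCurve a b (Pt.add a P Q),
      toPoint h2 hab (Pt.add a P Q) hR = toPoint h2 hab P hP + toPoint h2 hab Q hQ := by
  cases P with
  | zero =>
    have hadd : Pt.add a .zero Q = Q := by cases Q <;> rfl
    refine ⟨by rw [hadd]; exact hQ, ?_⟩
    rw [toPoint_irrel h2 hab hadd _ hQ]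
    exact (zero_add _).symm
  | some x₁ y₁ =>
    cases Q with
    | zero =>
      have hadd : Pt.add a (.some x₁ y₁) .zero = .some x₁ y₁ := rfl
      refine ⟨by rw [hadd]; exact hP, ?_⟩
      rw [toPoint_irrel h2 hab hadd _ hP]
      exact (add_zero _).symm
    | some x₂ y₂ =>
      by_cases hcase : x₁ = x₂ ∧ y₁ = -y₂
      · have hadd : Pt.add a (.some x₁ y₁) (.some x₂ y₂) = .zero := by
          simp [Pt.add, hcase]
        refine ⟨by rw [hadd]; trivial, ?_⟩
        rw [toPoint_irrel h2 hab hadd _ trivial]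
        show (0 : (Wc a b).Point) = _
        exact (Point.add_of_Y_eq (h₁ := Wc_ns h2 hab hP) (h₂ := Wc_ns h2 hab hQ)
          hcase.1 (by rw [Wc_negY]; exact hcase.2)).symm
      · set α : K := if x₁ = x₂ then (3 * x₁ ^ 2 + a) / (2 * y₁) else (y₁ - y₂) / (x₁ - x₂)
          with hα
        set x₃ : K := α ^ 2 - x₁ - x₂ with hx₃
        have hadd : Pt.add a (.some x₁ y₁) (.some x₂ y₂)
            = .some x₃ (-y₁ + α * (x₁ - x₃)) := by
          simp only [Pt.add, if_neg hcase]; rfl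
        have hxy : x₁ = x₂ → y₁ ≠ (Wc a b).negY x₂ y₂ := by
          intro hx hy
          rw [Wc_negY] at hy
          exact hcase ⟨hx, hy⟩
        have hslope : (Wc a b).slope x₁ x₂ y₁ y₂ = α := by
          by_cases hx : x₁ = x₂
          · rw [slope_of_Y_ne hx (hxy hx), Wc_negY, Wc_a₁, Wc_a₂, Wc_a₄, hα, if_pos hx]
            rw [show y₁ - -y₁ = 2 * y₁ by ring]
            congr 1
            ring
          · rw [slope_of_X_ne hx, hα, if_neg hx]
        have hX : (Wc a b).addX x₁ x₂ ((Wc a b).slope x₁ x₂ y₁ y₂) = x₃ := by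
          rw [hslope, addX, Wc_a₁, Wc_a₂, hx₃]
          ring
        have hY : (Wc a b).addY x₁ x₂ y₁ ((Wc a b).slope x₁ x₂ y₁ y₂)
            = -y₁ + α * (x₁ - x₃) := by
          rw [addY, negAddY, hX, Wc_negY, hslope]
          ring
        have hns := nonsingular_add (Wc_ns h2 hab hP) (Wc_ns h2 hab hQ) (fun h => hxy h.1 h.2)
        rw [hX, hY] at hns
        have hR' : OnCurve a b (Pt.some x₃ (-y₁ + α * (x₁ - x₃))) := Wc_equation.mp hns.1
        refine ⟨by rw [hadd]; exact hR', ?_⟩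
        rw [toPoint_irrel h2 hab hadd _ hR']
        show Point.some _ _ (Wc_ns h2 hab hR') =
          Point.some _ _ (Wc_ns h2 hab hP) + Point.some _ _ (Wc_ns h2 hab hQ)
        rw [Point.add_some (fun h => hxy h.1 h.2)]
        exact Point.some_congr hX.symm hY.symm _ _
end Aux

theorem add_left_cancel' {K : Type*} [Field K] (h2 : (2 : K) ≠ 0) (h3 : (3 : K) ≠ 0)
    (a b : K) (hab : 4 * a ^ 3 + 27 * b ^ 2 ≠ 0)
    (A B B' : Pt K) (hA : OnCurve a b A) (hB : OnCurve a b B) (hB' : OnCurve a b B')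
    (h : Pt.add a A B = Pt.add a A B') :
    B = B' := by
  classical
  obtain ⟨hR, e⟩ := toPoint_add h2 hab A B hA hB
  obtain ⟨hR', e'⟩ := toPoint_add h2 hab A B' hA hB'
  have key : toPoint h2 hab A hA + toPoint h2 hab B hB
      = toPoint h2 hab A hA + toPoint h2 hab B' hB' := by
    rw [← e, ← e']
    exact toPoint_irrel h2 hab h hR hR'
  exact toPoint_injective h2 hab B B' hB hB' (add_left_cancel key)
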